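/- Let n = 2m. The function f₀ = ⊕_{i=0}^{m-1} x_i x_{m+i} is the only bent short-cycle monomial rotation symmetric Boolean function in n variables. -/

import Mathlib

def chi (a : ZMod 2) : ℤ := (-1) ^ a.val

lemma chi_add (a b : ZMod 2) : chi (a + b) = chi a * chi b := by revert a b; decide

lemma chi_zero : chi 0 = 1 := rfl

lemma chi_one : chi 1 = -1 := rfl

lemma chi_sum {α : Type*} (s : Finset α) (f : α → ZMod 2) :
    chi (∑ i ∈ s, f i) = ∏ i ∈ s, chi (f i) := by
  classical
  induction s using Finset.cons_induction with
  | empty => simp [chi_zero]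
  | cons a s ha ih => rw [Finset.sum_cons, Finset.prod_cons, chi_add, ih]

lemma int_sq {a b : ℤ} (h : a ^ 2 = b ^ 2) : a = b ∨ a = -b := by
  have h2 : (a - b) * (a + b) = 0 := by linear_combination h
  rcases mul_eq_zero.mp h2 with h3 | h3
  · exact Or.inl (sub_eq_zero.mp h3)
  · exact Or.inr (eq_neg_of_add_eq_zero_left h3)

lemma zmod2_sum {M : Type*} [AddCommMonoid M] (g : ZMod 2 → M) :
    ∑ a : ZMod 2, g a = g 0 + g 1 := by
  have h : (Finset.univ : Finset (ZMod 2)) = {0, 1} := by decide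
  rw [h, Finset.sum_insert (by decide), Finset.sum_singleton]

lemma zmod2_ne_zero {a : ZMod 2} (h : a ≠ 0) : a = 1 := by revert a h; decide

def mrs (m : ℕ) (O : Finset (Finset (Fin (2*m)))) (x : Fin (2*m) → ZMod 2) : ZMod 2 :=
  ∑ T ∈ O, ∏ t ∈ T, x t

def wal (m : ℕ) (O : Finset (Finset (Fin (2*m)))) (w : Fin (2*m) → ZMod 2) : ℤ :=
  ∑ x : Fin (2*m) → ZMod 2, chi (mrs m O x + ∑ i, w i * x i)

lemma nobent (m : ℕ) (hm : 0 < m) (O : Finset (Finset (Fin (2*m))))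
    (B : Finset (Fin (2*m))) (hB : B.card < m)
    (hhit : ∀ T ∈ O, ∃ b ∈ B, b ∈ T)
    (hW : ∀ w : Fin (2*m) → ZMod 2, wal m O w = 2 ^ m ∨ wal m O w = -(2 ^ m)) :
    False := by
  classical
  have hW' : ∀ w, |wal m O w| = (2:ℤ) ^ m := by
    intro w
    rcases hW w with h | h <;> rw [h]
    · exact abs_of_nonneg (by positivity)
    · rw [abs_neg]; exact abs_of_nonneg (by positivity)
  set mask : (Fin (2*m) → ZMod 2) → (Fin (2*m) → ZMod 2) :=
    fun v i => if i ∈ B then v i else 0 with hmask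
  set T : ℤ := ∑ v : Fin (2*m) → ZMod 2, wal m O (mask v) with hT
  -- upper bound
  have hub : |T| ≤ 2 ^ (2*m) * 2 ^ m := by
    calc |T| ≤ ∑ v : Fin (2*m) → ZMod 2, |wal m O (mask v)| := Finset.abs_sum_le_sum_abs _ _
    _ = ∑ v : Fin (2*m) → ZMod 2, (2:ℤ) ^ m := Finset.sum_congr rfl fun v _ => hW' _
    _ = (Fintype.card (Fin (2*m) → ZMod 2)) * 2 ^ m := by
        rw [Finset.sum_const, Finset.card_univ, nsmul_eq_mul]
    _ = 2 ^ (2*m) * 2 ^ m := by rw [Fintype.card_fun]; simp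
  -- exact value
  have hP : T = ∑ x : Fin (2*m) → ZMod 2, ∏ i : Fin (2*m),
      (if i ∈ B then 1 + chi (x i) else 2) := by
    rw [hT]
    simp only [wal]
    have step1 : ∀ v x : Fin (2*m) → ZMod 2,
        chi (mrs m O x + ∑ i, mask v i * x i)
          = chi (mrs m O x) * ∏ i, chi (mask v i * x i) := by
      intro v x
      rw [chi_add, chi_sum]
    simp only [step1]
    rw [Finset.sum_comm]
    refine Finset.sum_congr rfl fun x _ => ?_
    rw [← Finset.mul_sum]
    have step2 : (∑ v : Fin (2*m) → ZMod 2, ∏ i, chi (mask v i * x i))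
        = ∏ i : Fin (2*m), ∑ a : ZMod 2, chi ((if i ∈ B then a else 0) * x i) := by
      rw [Finset.prod_univ_sum]
      rw [Fintype.piFinset_univ]
    rw [step2]
    have step3 : (∏ i : Fin (2*m), ∑ a : ZMod 2, chi ((if i ∈ B then a else 0) * x i))
        = ∏ i : Fin (2*m), (if i ∈ B then 1 + chi (x i) else 2) := by
      refine Finset.prod_congr rfl fun i _ => ?_
      rw [zmod2_sum (fun a => chi ((if i ∈ B then a else 0) * x i))]
      by_cases h : i ∈ B
      · simp only [h, if_true, zero_mul, one_mul, chi_zero]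
      · simp only [h, if_false, zero_mul, chi_zero]; norm_num
    rw [step3]
    by_cases hx : ∀ i ∈ B, x i = 0
    · have hfx : mrs m O x = 0 := by
        rw [mrs]
        refine Finset.sum_eq_zero fun Tm hTm => ?_
        obtain ⟨b, hbB, hbT⟩ := hhit Tm hTm
        exact Finset.prod_eq_zero hbT (hx b hbB)
      rw [hfx, chi_zero, one_mul]
    · push_neg at hx
      obtain ⟨i, hiB, hxi⟩ := hx
      have hzero : (∏ j : Fin (2*m), (if j ∈ B then 1 + chi (x j) else 2)) = 0 := by
        refine Finset.prod_eq_zero (Finset.mem_univ i) ?_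
        rw [if_pos hiB, zmod2_ne_zero hxi, chi_one]; ring
      rw [hzero, mul_zero]
  have hval : T = 2 ^ B.card * 4 ^ (2*m - B.card) := by
    rw [hP]
    rw [show (∑ x : Fin (2*m) → ZMod 2, ∏ i : Fin (2*m), (if i ∈ B then 1 + chi (x i) else 2))
        = ∏ i : Fin (2*m), ∑ a : ZMod 2, (if i ∈ B then 1 + chi a else 2) from by
      rw [Finset.prod_univ_sum, Fintype.piFinset_univ]]
    have hfac : ∀ i : Fin (2*m), (∑ a : ZMod 2, (if i ∈ B then 1 + chi a else 2))
        = (if i ∈ B then (2:ℤ) else 4) := by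
      intro i
      rw [zmod2_sum (fun a => if i ∈ B then 1 + chi a else (2:ℤ))]
      by_cases h : i ∈ B <;> simp only [h, if_true, if_false, chi_zero, chi_one] <;> ring
    rw [Finset.prod_congr rfl fun i _ => hfac i]
    rw [← Finset.prod_mul_prod_compl B (fun i => if i ∈ B then (2:ℤ) else 4)]
    have h1 : (∏ i ∈ B, (if i ∈ B then (2:ℤ) else 4)) = 2 ^ B.card := by
      rw [Finset.prod_congr rfl (fun i hi => if_pos hi), Finset.prod_const]
    have h2 : (∏ i ∈ Bᶜ, (if i ∈ B then (2:ℤ) else 4)) = 4 ^ (2*m - B.card) := by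
      rw [Finset.prod_congr rfl (fun i hi => if_neg (Finset.mem_compl.mp hi)),
        Finset.prod_const, Finset.card_compl, Fintype.card_fin]
    rw [h1, h2]
  -- contradiction
  clear hP hT
  clear_value T
  have hexp : (2:ℤ) ^ B.card * 4 ^ (2*m - B.card) = 2 ^ (4*m - B.card) := by
    have : (4:ℤ) = 2 ^ 2 := by norm_num
    rw [this, ← pow_mul, ← pow_add]
    congr 1
    omega
  have hlt : (2:ℤ) ^ (2*m) * 2 ^ m < 2 ^ (4*m - B.card) := by
    rw [← pow_add]
    exact pow_lt_pow_right₀ (by norm_num) (by omega)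
  have habs : T ≤ |T| := le_abs_self T
  linarith

def pairEquiv (m : ℕ) : (Fin m → ZMod 2 × ZMod 2) ≃ (Fin (2*m) → ZMod 2) where
  toFun y := fun t => if h : t.val < m then (y ⟨t.val, h⟩).1
      else (y ⟨t.val - m, by have := t.isLt; omega⟩).2
  invFun x := fun i => (x ⟨i.val, by have := i.isLt; omega⟩,
      x ⟨m + i.val, by have := i.isLt; omega⟩)
  left_inv y := by
    funext i
    have h1 : i.val < m := i.isLt
    refine Prod.ext ?_ ?_ <;> simp only [Fin.val_mk]
    · rw [dif_pos h1]
    · rw [dif_neg (by omega : ¬ (m + i.val < m))]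
      have hix : (⟨m + i.val - m, by omega⟩ : Fin m) = i :=
        Fin.ext (show m + i.val - m = i.val by omega)
      rw [hix]
  right_inv x := by
    funext t
    by_cases h : t.val < m
    · simp only [dif_pos h]
    · simp only [dif_neg h]
      exact congrArg x (Fin.ext (by simp; omega))

lemma sum_split {M : Type*} [AddCommMonoid M] (m : ℕ) (F : Fin (2*m) → M) :
    ∑ t : Fin (2*m), F t
      = ∑ i : Fin m, (F ⟨i.val, by have := i.isLt; omega⟩
          + F ⟨m + i.val, by have := i.isLt; omega⟩) := by
  rw [← Equiv.sum_comp (finCongr (show m + m = 2*m by omega)) F]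
  rw [Fin.sum_univ_add]
  rw [← Finset.sum_add_distrib]
  refine Finset.sum_congr rfl fun i _ => ?_
  congr 1


lemma zmod_factor : ∀ a b : ZMod 2,
    (∑ p : ZMod 2 × ZMod 2, chi (p.1 * p.2 + (a * p.1 + b * p.2))) = 2 ∨
    (∑ p : ZMod 2 × ZMod 2, chi (p.1 * p.2 + (a * p.1 + b * p.2))) = -2 := by decide

lemma bent0 (m : ℕ) (hm : 0 < m) (w : Fin (2*m) → ZMod 2) :
    (∑ x : Fin (2*m) → ZMod 2,
      chi ((∑ i : Fin m, x ⟨i.val, by have := i.isLt; omega⟩ *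
          x ⟨m + i.val, by have := i.isLt; omega⟩) + ∑ i, w i * x i)) = 2 ^ m ∨
    (∑ x : Fin (2*m) → ZMod 2,
      chi ((∑ i : Fin m, x ⟨i.val, by have := i.isLt; omega⟩ *
          x ⟨m + i.val, by have := i.isLt; omega⟩) + ∑ i, w i * x i)) = -(2 ^ m) := by
  classical
  set G : (Fin (2*m) → ZMod 2) → ℤ := fun x =>
    chi ((∑ i : Fin m, x ⟨i.val, by have := i.isLt; omega⟩ *
        x ⟨m + i.val, by have := i.isLt; omega⟩) + ∑ i, w i * x i) with hG
  have key : (∑ x : Fin (2*m) → ZMod 2, G x)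
      = ∏ i : Fin m, ∑ p : ZMod 2 × ZMod 2,
          chi (p.1 * p.2 + (w ⟨i.val, by have := i.isLt; omega⟩ * p.1
            + w ⟨m + i.val, by have := i.isLt; omega⟩ * p.2)) := by
    rw [← Equiv.sum_comp (pairEquiv m) G]
    have hGe : ∀ y : Fin m → ZMod 2 × ZMod 2,
        G (pairEquiv m y) = ∏ i : Fin m, chi ((y i).1 * (y i).2
          + (w ⟨i.val, by have := i.isLt; omega⟩ * (y i).1
            + w ⟨m + i.val, by have := i.isLt; omega⟩ * (y i).2)) := by
      intro y
      have hx1 : ∀ i : Fin m, pairEquiv m y ⟨i.val, by have := i.isLt; omega⟩ = (y i).1 := by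
        intro i
        show (if h : i.val < m then _ else _) = _
        rw [dif_pos i.isLt]
      have hx2 : ∀ i : Fin m, pairEquiv m y ⟨m + i.val, by have := i.isLt; omega⟩ = (y i).2 := by
        intro i
        show (if h : m + i.val < m then _ else _) = _
        rw [dif_neg (by omega : ¬ (m + i.val < m))]
        have hix : (⟨m + i.val - m, by omega⟩ : Fin m) = i :=
          Fin.ext (show m + i.val - m = i.val by omega)
        rw [hix]
      rw [hG]
      simp only
      rw [sum_split m (fun t => w t * (pairEquiv m y) t)]
      simp only [hx1, hx2]
      rw [← Finset.sum_add_distrib, chi_sum]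
    simp only [hGe]
    rw [Finset.prod_univ_sum]
    rw [Fintype.piFinset_univ]
  have hsq : (∑ x : Fin (2*m) → ZMod 2, G x) ^ 2 = ((2:ℤ) ^ m) ^ 2 := by
    rw [key, ← Finset.prod_pow]
    have hfour : ∀ i : Fin m, (∑ p : ZMod 2 × ZMod 2,
        chi (p.1 * p.2 + (w ⟨i.val, by have := i.isLt; omega⟩ * p.1
          + w ⟨m + i.val, by have := i.isLt; omega⟩ * p.2))) ^ 2 = 4 := by
      intro i
      rcases zmod_factor (w ⟨i.val, by have := i.isLt; omega⟩)
        (w ⟨m + i.val, by have := i.isLt; omega⟩) with h | h <;> rw [h] <;> norm_num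
    rw [Finset.prod_congr rfl fun i _ => hfour i, Finset.prod_const]
    rw [show (4:ℤ) = 2^2 by norm_num, ← pow_mul, ← pow_mul, Finset.card_univ,
      Fintype.card_fin, mul_comm]
  exact int_sq hsq


lemma image_id2m (m : ℕ) [NeZero (2*m)] (S : Finset (Fin (2*m))) :
    S.image (· + (0 : Fin (2*m))) = S := by
  have h : (fun x : Fin (2*m) => x + 0) = id := by funext x; simp
  rw [h, Finset.image_id]

lemma image_comp (m : ℕ) [NeZero (2*m)] (S : Finset (Fin (2*m))) (a b : Fin (2*m)) :
    (S.image (· + a)).image (· + b) = S.image (· + (a + b)) := by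
  rw [Finset.image_image]
  congr 1
  funext x
  show x + a + b = x + (a + b)
  rw [add_assoc]

lemma exists_g (m : ℕ) (hm : 0 < m) (S : Finset (Fin (2*m)))
    (hshort : (Finset.univ.image (fun j : Fin (2*m) => S.image (· + j))).card < 2*m) :
    ∃ g : ℕ, 0 < g ∧ g ≤ m ∧ g ∣ 2*m ∧
      ∀ k (h : k < 2*m), g ∣ k → S.image (· + (⟨k, h⟩ : Fin (2*m))) = S := by
  haveI : NeZero (2*m) := ⟨by omega⟩
  classical
  have hninj : ¬ Function.Injective (fun j : Fin (2*m) => S.image (· + j)) := by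
    intro hinj
    rw [Finset.card_image_of_injective _ hinj, Finset.card_univ, Fintype.card_fin] at hshort
    omega
  rw [Function.not_injective_iff] at hninj
  obtain ⟨j₁, j₂, hj, hne⟩ := hninj
  have hstab : ∀ h : Fin (2*m), S.image (· + h) = S → S.image (· + (-h)) = S := by
    intro h hh
    have h2 := image_comp m S h (-h)
    rw [hh, add_neg_cancel, image_id2m m S] at h2
    exact h2.symm ▸ h2
  have hc : S.image (· + (j₁ + -j₂)) = S := by
    have h2 := image_comp m S j₁ (-j₂)
    have h3 := image_comp m S j₂ (-j₂)
    have hj' : S.image (· + j₁) = S.image (· + j₂) := hj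
    rw [hj'] at h2
    rw [h3, add_neg_cancel, image_id2m m S] at h2
    exact h2.symm
  set c : Fin (2*m) := j₁ + -j₂ with hcdef
  have hc0 : c ≠ 0 := fun h => hne (by rwa [hcdef, add_neg_eq_zero] at h)
  have hcval : 0 < c.val := by
    rcases Nat.eq_zero_or_pos c.val with h | h
    · exact absurd (Fin.ext (h.trans (Fin.val_zero _).symm)) hc0
    · exact h
  set P : ℕ → Prop := fun k => 0 < k ∧ ∃ h : k < 2*m, S.image (· + (⟨k, h⟩ : Fin (2*m))) = S
    with hPdef
  have hPc : P c.val := ⟨hcval, c.isLt, by rw [Fin.eta]; exact hc⟩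
  have hPex : ∃ k, P k := ⟨c.val, hPc⟩
  set g := Nat.find hPex with hgdef
  obtain ⟨hg1, hg2, hgS⟩ : 0 < g ∧ ∃ h : g < 2*m, S.image (· + (⟨g, h⟩ : Fin (2*m))) = S :=
    Nat.find_spec hPex
  have hmin : ∀ k, k < g → ¬ P k := fun k hk => Nat.find_min hPex hk
  have hglec : g ≤ c.val := Nat.find_min' hPex hPc
  have hmul : ∀ k, ∀ h : k < 2*m, g ∣ k → S.image (· + (⟨k, h⟩ : Fin (2*m))) = S := by
    intro k
    induction k using Nat.strong_induction_on with
    | _ k ih =>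
      intro h hdvd
      rcases Nat.eq_zero_or_pos k with h0 | hpos
      · subst h0
        have h1 : (⟨0, h⟩ : Fin (2*m)) = 0 := Fin.ext (by simp)
        rw [h1, image_id2m m S]
      · have hgk : g ≤ k := Nat.le_of_dvd hpos hdvd
        have hsplit : (⟨k - g, by omega⟩ : Fin (2*m)) + (⟨g, hg2⟩ : Fin (2*m))
            = (⟨k, h⟩ : Fin (2*m)) := by
          apply Fin.ext
          rw [Fin.val_add]
          show (k - g + g) % (2*m) = k
          rw [Nat.sub_add_cancel hgk]
          exact Nat.mod_eq_of_lt h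
        rw [← hsplit, ← image_comp m S,
          ih (k - g) (by omega) (by omega) (Nat.dvd_sub hdvd dvd_rfl), hgS]
  -- g divides 2m
  have hdm := Nat.div_add_mod (2*m) g
  have hrlt : (2*m) % g < g := Nat.mod_lt _ hg1
  have hdvd2m : g ∣ 2*m := by
    by_cases hr : (2*m) % g = 0
    · exact Nat.dvd_of_mod_eq_zero hr
    · exfalso
      set r := (2*m) % g with hrdef
      have h1 : S.image (· + (⟨2*m - r, by omega⟩ : Fin (2*m))) = S :=
        hmul _ (by omega) ⟨2*m/g, by omega⟩
      have h2 := hstab _ h1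
      have h3 : (⟨r, by omega⟩ : Fin (2*m)) = -(⟨2*m - r, by omega⟩ : Fin (2*m)) := by
        apply eq_neg_of_add_eq_zero_left
        apply Fin.ext
        rw [Fin.val_add]
        show (r + (2*m - r)) % (2*m) = (0 : Fin (2*m)).val
        rw [Fin.val_zero]
        have : r + (2*m - r) = 2*m := by omega
        rw [this, Nat.mod_self]
      rw [← h3] at h2
      exact hmin r (by omega) ⟨by omega, by omega, h2⟩
  -- g ≤ m
  obtain ⟨q, hq⟩ := hdvd2m
  have hq2 : 2 ≤ q := by
    rcases Nat.lt_or_ge q 2 with hq' | hq'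
    · interval_cases q
      · omega
      · exfalso; omega
    · exact hq'
  have hgm : g ≤ m := by
    have := Nat.mul_le_mul_left g hq2
    omega
  exact ⟨g, hg1, hgm, ⟨q, hq⟩, hmul⟩


lemma card_two_case (m : ℕ) (hm : 0 < m) (S : Finset (Fin (2*m)))
    (hS0 : (⟨0, Nat.mul_pos Nat.zero_lt_two hm⟩ : Fin (2*m)) ∈ S) (hcard : S.card ≤ 2)
    (g : ℕ) (hg1 : 0 < g) (hgm : g ≤ m)
    (hgS : S.image (· + (⟨g, by omega⟩ : Fin (2*m))) = S) :
    S = {(⟨0, Nat.mul_pos Nat.zero_lt_two hm⟩ : Fin (2*m)), (⟨m, by omega⟩ : Fin (2*m))} := by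
  haveI : NeZero (2*m) := ⟨by omega⟩
  classical
  set c : Fin (2*m) := ⟨g, by omega⟩ with hcdef
  have hz : (⟨0, by omega⟩ : Fin (2*m)) = 0 := Fin.ext (by simp)
  rw [hz] at hS0 ⊢
  have hc0 : c ≠ 0 := by
    intro h
    have := congrArg Fin.val h
    simp [hcdef] at this
    omega
  have hcS : c ∈ S := by
    rw [← hgS]
    exact Finset.mem_image.mpr ⟨0, hS0, zero_add c⟩
  have hsub : ({0, c} : Finset (Fin (2*m))) ⊆ S := by
    intro t ht
    rcases Finset.mem_insert.mp ht with h | h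
    · rwa [h]
    · rw [Finset.mem_singleton.mp h]; exact hcS
  have hcard2 : ({0, c} : Finset (Fin (2*m))).card = 2 := by
    rw [Finset.card_insert_of_notMem (by simpa using (Ne.symm hc0)), Finset.card_singleton]
  have hSeq : ({0, c} : Finset (Fin (2*m))) = S :=
    Finset.eq_of_subset_of_card_le hsub (by omega)
  have hccS : c + c ∈ S := by
    have : c + c ∈ Finset.image (fun x => x + c) S := Finset.mem_image.mpr ⟨c, hcS, rfl⟩
    rwa [hgS] at this
  rw [← hSeq] at hccS
  rcases Finset.mem_insert.mp hccS with h | h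
  · -- c + c = 0, hence g = m
    have hval := congrArg Fin.val h
    rw [Fin.val_add, Fin.val_zero] at hval
    have hgval : c.val = g := rfl
    rw [hgval] at hval
    have hgm' : g = m := by
      have h1 : g + g < 2*(2*m) := by omega
      rcases Nat.lt_or_ge (g + g) (2*m) with h2 | h2
      · rw [Nat.mod_eq_of_lt h2] at hval; omega
      · have h3 : g + g = 2*m := by omega
        omega
    have hcm : c = ⟨m, by omega⟩ := by
      apply Fin.ext
      have h1 : c.val = g := rfl
      have h2 : ((⟨m, by omega⟩ : Fin (2*m))).val = m := rfl
      omega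
    rw [← hSeq, hcm]
  · exfalso
    rw [Finset.mem_singleton] at h
    have : c = 0 := by
      have h' := congrArg (· + (-c)) h
      simpa [add_assoc] using h'
    exact hc0 this


set_option maxHeartbeats 1000000 in
lemma orbit_pairs (m : ℕ) (hm : 0 < m) (x : Fin (2*m) → ZMod 2) :
    (∑ T ∈ Finset.univ.image (fun j : Fin (2*m) =>
        ({(⟨0, Nat.mul_pos Nat.zero_lt_two hm⟩ : Fin (2*m)), (⟨m, by omega⟩ : Fin (2*m))} : Finset (Fin (2*m))).image (· + j)),
      ∏ t ∈ T, x t)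
    = ∑ i : Fin m, x ⟨i.val, by have := i.isLt; omega⟩ *
        x ⟨m + i.val, by have := i.isLt; omega⟩ := by
  haveI : NeZero (2*m) := ⟨by omega⟩
  classical
  have hvmb : ∀ j : Fin (2*m), ((⟨m, by omega⟩ : Fin (2*m)) + j).val
      = if j.val < m then m + j.val else j.val - m := by
    intro j
    rw [Fin.val_add]
    show (m + j.val) % (2*m) = _
    have h2 := j.isLt
    split
    · exact Nat.mod_eq_of_lt (by omega)
    · have h3 : m + j.val = (j.val - m) + (2*m) := by omega
      rw [h3, Nat.add_mod_right]
      exact Nat.mod_eq_of_lt (by omega)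
  have himg : ∀ j : Fin (2*m),
      ({(⟨0, by omega⟩ : Fin (2*m)), (⟨m, by omega⟩ : Fin (2*m))} : Finset (Fin (2*m))).image (· + j)
        = {j, (⟨m, by omega⟩ : Fin (2*m)) + j} := by
    intro j
    rw [Finset.image_insert, Finset.image_singleton]
    congr 1
    show (⟨0, by omega⟩ : Fin (2*m)) + j = j
    have hz : (⟨0, by omega⟩ : Fin (2*m)) = 0 := Fin.ext (by simp)
    rw [hz, zero_add]
  have horb : Finset.univ.image (fun j : Fin (2*m) =>
      ({(⟨0, by omega⟩ : Fin (2*m)), (⟨m, by omega⟩ : Fin (2*m))} : Finset (Fin (2*m))).image (· + j))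
      = Finset.univ.image (fun i : Fin m =>
        ({(⟨i.val, by have := i.isLt; omega⟩ : Fin (2*m)),
          (⟨m + i.val, by have := i.isLt; omega⟩ : Fin (2*m))} : Finset (Fin (2*m)))) := by
    apply Finset.ext
    intro T
    simp only [Finset.mem_image, Finset.mem_univ, true_and]
    constructor
    · rintro ⟨j, hT⟩
      rw [himg j] at hT
      by_cases hj : j.val < m
      · refine ⟨⟨j.val, hj⟩, ?_⟩
        rw [← hT]
        have e1 : (⟨(⟨j.val, hj⟩ : Fin m).val, by omega⟩ : Fin (2*m)) = j := Fin.ext rfl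
        have e2 : (⟨m + (⟨j.val, hj⟩ : Fin m).val, by omega⟩ : Fin (2*m))
            = (⟨m, by omega⟩ : Fin (2*m)) + j := by
          apply Fin.ext
          rw [hvmb j, if_pos hj]
        rw [e1, e2]
      · refine ⟨⟨j.val - m, by have := j.isLt; omega⟩, ?_⟩
        rw [← hT]
        have e1 : (⟨(⟨j.val - m, by have := j.isLt; omega⟩ : Fin m).val, by omega⟩ : Fin (2*m))
            = (⟨m, by omega⟩ : Fin (2*m)) + j := by
          apply Fin.ext
          rw [hvmb j, if_neg hj]
        have e2 : (⟨m + (⟨j.val - m, by have := j.isLt; omega⟩ : Fin m).val, by omega⟩ : Fin (2*m))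
            = j := by
          apply Fin.ext
          show m + (j.val - m) = j.val
          have := j.isLt
          omega
        rw [e1, e2, Finset.pair_comm]
    · rintro ⟨i, hT⟩
      refine ⟨⟨i.val, by have := i.isLt; omega⟩, ?_⟩
      rw [himg, ← hT]
      have e1 : (⟨i.val, by have := i.isLt; omega⟩ : Fin (2*m))
          = (⟨(⟨i.val, by have := i.isLt; omega⟩ : Fin (2*m)).val, by omega⟩ : Fin (2*m)) :=
        Fin.ext rfl
      have e2 : ((⟨m, by omega⟩ : Fin (2*m)) + (⟨i.val, by have := i.isLt; omega⟩ : Fin (2*m)))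
          = (⟨m + i.val, by have := i.isLt; omega⟩ : Fin (2*m)) := by
        apply Fin.ext
        rw [hvmb]
        show (if i.val < m then m + i.val else i.val - m) = m + i.val
        rw [if_pos i.isLt]
      rw [e2]
  rw [horb, Finset.sum_image ?hinj]
  case hinj =>
    intro i _ i' _ heq
    have h1 : (⟨i.val, by have := i.isLt; omega⟩ : Fin (2*m)) ∈
        ({(⟨i'.val, by have := i'.isLt; omega⟩ : Fin (2*m)),
          (⟨m + i'.val, by have := i'.isLt; omega⟩ : Fin (2*m))} : Finset (Fin (2*m))) := by
      simp only at heq; rw [← heq]; exact Finset.mem_insert_self _ _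
    rcases Finset.mem_insert.mp h1 with h | h
    · have hv := congrArg Fin.val h
      exact Fin.ext hv
    · rw [Finset.mem_singleton] at h
      have hv : i.val = m + i'.val := congrArg Fin.val h
      have hi : i.val < m := i.isLt
      omega
  refine Finset.sum_congr rfl fun i _ => ?_
  rw [Finset.prod_pair (by
    intro h
    have hv : i.val = m + i.val := congrArg Fin.val h
    have hi : i.val < m := i.isLt
    omega)]


lemma not_rhs (m : ℕ) (hm : 0 < m) (S : Finset (Fin (2*m))) (hcard : 3 ≤ S.card) :
    ¬ (∀ x : Fin (2*m) → ZMod 2,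
        (∑ T ∈ Finset.univ.image (fun j : Fin (2*m) => S.image (· + j)), ∏ t ∈ T, x t)
          = ∑ i : Fin m, x ⟨i.val, by have := i.isLt; omega⟩ *
              x ⟨m + i.val, by rw [two_mul]; exact Nat.add_lt_add_left i.isLt m⟩) := by
  haveI : NeZero (2*m) := ⟨by omega⟩
  classical
  intro hR
  set x : Fin (2*m) → ZMod 2 := fun t => if t.val = 0 ∨ t.val = m then 1 else 0 with hxdef
  have hRx := hR x
  -- LHS is 0
  have hL : (∑ T ∈ Finset.univ.image (fun j : Fin (2*m) => S.image (· + j)), ∏ t ∈ T, x t)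
      = 0 := by
    refine Finset.sum_eq_zero fun T hT => ?_
    obtain ⟨j, _, hTj⟩ := Finset.mem_image.mp hT
    have hTcard : T.card = S.card := by
      rw [← hTj]
      exact Finset.card_image_of_injective _ (add_left_injective j)
    have hex : ∃ t ∈ T, x t = 0 := by
      by_contra hall
      push_neg at hall
      have hsub : T ⊆ {(⟨0, by omega⟩ : Fin (2*m)), (⟨m, by omega⟩ : Fin (2*m))} := by
        intro t ht
        have := hall t ht
        rw [hxdef] at this
        simp only at this
        by_cases hcond : t.val = 0 ∨ t.val = m
        · rcases hcond with h | h
          · exact Finset.mem_insert.mpr (Or.inl (Fin.ext (by simpa using h)))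
          · exact Finset.mem_insert.mpr (Or.inr (Finset.mem_singleton.mpr
              (Fin.ext (by simpa using h))))
        · rw [if_neg hcond] at this
          exact absurd rfl this
      have := Finset.card_le_card hsub
      have h2 : ({(⟨0, by omega⟩ : Fin (2*m)), (⟨m, by omega⟩ : Fin (2*m))} :
          Finset (Fin (2*m))).card ≤ 2 := Finset.card_insert_le _ _ |>.trans (by simp)
      omega
    obtain ⟨t, htT, hxt⟩ := hex
    exact Finset.prod_eq_zero htT hxt
  -- RHS is 1
  have hR1 : (∑ i : Fin m, x ⟨i.val, by have := i.isLt; omega⟩ *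
      x ⟨m + i.val, by have := i.isLt; omega⟩) = 1 := by
    have hx1 : ∀ t : Fin (2*m), t.val = 0 ∨ t.val = m → x t = 1 := fun t ht => if_pos ht
    have hx0 : ∀ t : Fin (2*m), ¬(t.val = 0 ∨ t.val = m) → x t = 0 := fun t ht => if_neg ht
    rw [Finset.sum_eq_single_of_mem (⟨0, hm⟩ : Fin m) (Finset.mem_univ _)]
    · rw [hx1 _ (Or.inl rfl), hx1 _ (Or.inr rfl)]
      exact one_mul 1
    · intro i _ hi
      have hival : i.val ≠ 0 := fun h => hi (Fin.ext (by simpa using h))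
      have hilt : i.val < m := i.isLt
      rw [hx0 _ (by
        intro h
        rcases h with h | h
        · exact hival h
        · have h2 : i.val = m := h
          omega), zero_mul]
  rw [hL, hR1] at hRx
  exact absurd hRx (by decide)


lemma image_comp' (m : ℕ) [NeZero (2*m)] (S : Finset (Fin (2*m))) (a b : Fin (2*m)) :
    (S.image (· + a)).image (· + b) = S.image (· + (a + b)) := by
  rw [Finset.image_image]
  congr 1
  funext x
  show x + a + b = x + (a + b)
  rw [add_assoc]

lemma val_add_cases (m : ℕ) (a b : Fin (2*m)) :
    ((a + b).val = a.val + b.val ∧ a.val + b.val < 2*m) ∨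
    ((a + b).val = a.val + b.val - 2*m ∧ 2*m ≤ a.val + b.val) := by
  rw [Fin.val_add]
  rcases Nat.lt_or_ge (a.val + b.val) (2*m) with h | h
  · exact Or.inl ⟨Nat.mod_eq_of_lt h, h⟩
  · refine Or.inr ⟨?_, h⟩
    have ha := a.isLt
    have hb := b.isLt
    rw [Nat.mod_eq_sub_mod h]
    have h5 : a.val + b.val - 2*m < 2*m := by omega
    exact Nat.mod_eq_of_lt h5

lemma exists_hit (m : ℕ) (hm : 0 < m) (S : Finset (Fin (2*m)))
    (hS0 : (⟨0, Nat.mul_pos Nat.zero_lt_two hm⟩ : Fin (2*m)) ∈ S) (hcard3 : 3 ≤ S.card)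
    (g : ℕ) (hg1 : 0 < g) (hgm : g ≤ m)
    (hmul : ∀ k (h : k < 2*m), g ∣ k → S.image (· + (⟨k, h⟩ : Fin (2*m))) = S) :
    ∃ B : Finset (Fin (2*m)), B.card < m ∧
      ∀ T ∈ Finset.univ.image (fun j : Fin (2*m) => S.image (· + j)), ∃ b ∈ B, b ∈ T := by
  haveI : NeZero (2*m) := ⟨by omega⟩
  classical
  have hz : (⟨0, by omega⟩ : Fin (2*m)) = 0 := Fin.ext (by simp)
  have h0S : (0 : Fin (2*m)) ∈ S := hz ▸ hS0
  have hm2 : 2 ≤ m := by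
    have : S.card ≤ 2*m := by simpa using Finset.card_le_univ S
    omega
  rcases Nat.lt_or_ge g m with hlt | hge
  · -- g < m : B = lifts of range g
    refine ⟨(Finset.range g).attachFin (fun r hr => by
      rw [Finset.mem_range] at hr; omega), ?_, ?_⟩
    · rw [Finset.card_attachFin, Finset.card_range]; omega
    · intro T hT
      obtain ⟨j, _, hTj⟩ := Finset.mem_image.mp hT
      obtain ⟨r, hrdef⟩ : ∃ r, r = j.val % g := ⟨_, rfl⟩
      have hdm := Nat.div_add_mod j.val g
      rw [← hrdef] at hdm
      have hrg : r < g := hrdef ▸ Nat.mod_lt _ hg1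
      have hjlt := j.isLt
      refine ⟨⟨r, by omega⟩, ?_, ?_⟩
      · exact (Finset.mem_attachFin _).mpr (Finset.mem_range.mpr hrg)
      · -- ⟨r,_⟩ ∈ T = S.image (·+j)
        have h1 : S.image (· + (⟨j.val - r, by omega⟩ : Fin (2*m))) = S :=
          hmul _ (by omega) ⟨j.val / g, by omega⟩
        have h2 := image_comp' m S (⟨j.val - r, by omega⟩ : Fin (2*m)) (⟨r, by omega⟩ : Fin (2*m))
        have h3 : (⟨j.val - r, by omega⟩ : Fin (2*m)) + (⟨r, by omega⟩ : Fin (2*m)) = j := by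
          apply Fin.ext
          rw [Fin.val_add]
          show (j.val - r + r) % (2*m) = j.val
          have h4 : j.val - r + r = j.val := by omega
          rw [h4]
          exact Nat.mod_eq_of_lt j.isLt
        rw [h1, h3] at h2
        rw [← hTj, ← h2]
        exact Finset.mem_image.mpr ⟨0, h0S, zero_add _⟩
  · -- g = m
    have hgeq : g = m := by omega
    have hdvdm : g ∣ m := hgeq ▸ dvd_rfl
    have hmb2 : m < 2*m := by omega
    have himS : S.image (· + (⟨m, hmb2⟩ : Fin (2*m))) = S := hmul m hmb2 hdvdm
    have hmbS : (⟨m, hmb2⟩ : Fin (2*m)) ∈ S := by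
      rw [← himS]
      exact Finset.mem_image.mpr ⟨0, h0S, zero_add _⟩
    obtain ⟨a, haS, ha0, ham⟩ : ∃ a ∈ S, a.val ≠ 0 ∧ a.val ≠ m := by
      by_contra hcon
      push_neg at hcon
      have hsub : S ⊆ {0, (⟨m, hmb2⟩ : Fin (2*m))} := by
        intro t ht
        by_cases h0 : t.val = 0
        · exact Finset.mem_insert.mpr (Or.inl (by apply Fin.ext; simp [h0]))
        · have htm : t.val = m := hcon t ht h0
          exact Finset.mem_insert.mpr (Or.inr (Finset.mem_singleton.mpr (Fin.ext htm)))
      have h2 := Finset.card_le_card hsub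
      have h3 : ({0, (⟨m, hmb2⟩ : Fin (2*m))} : Finset (Fin (2*m))).card ≤ 2 :=
        (Finset.card_insert_le _ _).trans (by simp)
      omega
    have hamS : a + (⟨m, hmb2⟩ : Fin (2*m)) ∈ S := by
      rw [← himS]
      exact Finset.mem_image.mpr ⟨a, haS, rfl⟩
    refine ⟨(Finset.range (m-1)).attachFin (fun r hr => by
      rw [Finset.mem_range] at hr; omega), ?_, ?_⟩
    · rw [Finset.card_attachFin, Finset.card_range]; omega
    · intro T hT
      obtain ⟨j, _, hTj⟩ := Finset.mem_image.mp hT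
      have hmbv : ((⟨m, hmb2⟩ : Fin (2*m))).val = m := rfl
      have p2 := val_add_cases m (⟨m, hmb2⟩ : Fin (2*m)) j
      have p3 := val_add_cases m a j
      have p4a := val_add_cases m a (⟨m, hmb2⟩ : Fin (2*m))
      have p4 := val_add_cases m (a + (⟨m, hmb2⟩ : Fin (2*m))) j
      have hjlt := j.isLt
      have halt := a.isLt
      rw [hmbv] at p2 p4a
      have hchoice : j.val ≤ m - 2 ∨ ((⟨m, hmb2⟩ : Fin (2*m)) + j).val ≤ m - 2
          ∨ (a + j).val ≤ m - 2 ∨ ((a + (⟨m, hmb2⟩ : Fin (2*m))) + j).val ≤ m - 2 := by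
        omega
      have hmem : ∀ b : Fin (2*m), b ∈ S → b + j ∈ T := by
        intro b hb
        rw [← hTj]
        exact Finset.mem_image.mpr ⟨b, hb, rfl⟩
      have hBmem : ∀ b : Fin (2*m), b.val ≤ m - 2 →
          b ∈ (Finset.range (m-1)).attachFin (fun r hr => by
            rw [Finset.mem_range] at hr; omega) := by
        intro b hb
        exact (Finset.mem_attachFin _).mpr (Finset.mem_range.mpr (by omega))
      rcases hchoice with h | h | h | h
      · exact ⟨j, hBmem j h, by rw [← zero_add j]; exact hmem 0 h0S⟩
      · exact ⟨_, hBmem _ h, hmem _ hmbS⟩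
      · exact ⟨a + j, hBmem _ h, hmem a haS⟩
      · exact ⟨_, hBmem _ h, hmem _ hamS⟩


/-- In `n = 2m` variables, `f₀ = ⊕_{i=0}^{m-1} x_i x_{m+i}` is the only
bent short-cycle MRS Boolean function: a short-cycle MRS function (sum of the fewer
than `n` distinct cyclic shifts of a monomial containing `x₀`) is bent iff it equals `f₀`. -/
theorem stmt13 (m : ℕ) (hm : 0 < m) (S : Finset (Fin (2*m)))
    (hS0 : (⟨0, by omega⟩ : Fin (2*m)) ∈ S)
    (hshort : (Finset.univ.image (fun j : Fin (2*m) => S.image (· + j))).card < 2*m) :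
    (∀ w : Fin (2*m) → ZMod 2,
      (∑ x : Fin (2*m) → ZMod 2,
        (-1 : ℤ) ^ (((∑ T ∈ Finset.univ.image (fun j : Fin (2*m) => S.image (· + j)),
            ∏ t ∈ T, x t) + ∑ i, w i * x i).val)) = 2 ^ m ∨
      (∑ x : Fin (2*m) → ZMod 2,
        (-1 : ℤ) ^ (((∑ T ∈ Finset.univ.image (fun j : Fin (2*m) => S.image (· + j)),
            ∏ t ∈ T, x t) + ∑ i, w i * x i).val)) = -(2 ^ m))
    ↔ (∀ x : Fin (2*m) → ZMod 2,
        (∑ T ∈ Finset.univ.image (fun j : Fin (2*m) => S.image (· + j)), ∏ t ∈ T, x t)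
          = ∑ i : Fin m, x ⟨i.val, by have := i.isLt; omega⟩ *
              x ⟨m + i.val, by have := i.isLt; omega⟩) := by
  haveI : NeZero (2*m) := ⟨by omega⟩
  classical
  obtain ⟨g, hg1, hgm, hgdvd, hmul⟩ := exists_g m hm S hshort
  by_cases hc : S.card ≤ 2
  · have hSeq := card_two_case m hm S hS0 hc g hg1 hgm (hmul g (by omega) dvd_rfl)
    rw [hSeq]
    apply iff_of_true
    · intro w
      simp only [orbit_pairs m hm]
      exact bent0 m hm w
    · exact fun x => orbit_pairs m hm x
  · push_neg at hc
    obtain ⟨B, hBcard, hBhit⟩ := exists_hit m hm S hS0 hc g hg1 hgm hmul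
    apply iff_of_false
    · intro hL
      exact nobent m hm _ B hBcard hBhit hL
    · exact not_rhs m hm S hc
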